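/- Suppose (x(t), v(t)) solves ẋ = Ax + Bkv, v̇ = αv(μ - Cx) with μ, α, k > 0, CA⁻¹B ≠ 0, and suppose there exist 0 < a < b such that a < x_i(t) < b for all i and a < v(t) < b for all t ≥ 0. Then the time averages (1/t)∫₀ᵗ x(s)ds and (1/t)∫₀ᵗ v(s)ds converge as t → ∞ to the positive equilibrium x* = A⁻¹Bμ/(CA⁻¹B) and v* = -μ/(CA⁻¹B·k), respectively. -/

import Mathlib

open Matrix Filter

theorem time_averages_converge
    (d : ℕ) (A : Matrix (Fin d) (Fin d) ℝ) (B C : Fin d → ℝ)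
    (hA : IsUnit A) (hg : C ⬝ᵥ A⁻¹ *ᵥ B ≠ 0)
    (k α μ : ℝ) (hk : 0 < k) (hα : 0 < α) (hμ : 0 < μ)
    (x : ℝ → Fin d → ℝ) (v : ℝ → ℝ)
    (hx : ∀ t, ∀ i, HasDerivAt (fun s => x s i) ((A *ᵥ x t + (k * v t) • B) i) t)
    (hv : ∀ t, HasDerivAt v (α * v t * (μ - C ⬝ᵥ x t)) t)
    (a b : ℝ) (ha : 0 < a) (hab : a < b)
    (hxb : ∀ t ≥ (0 : ℝ), ∀ i, a < x t i ∧ x t i < b)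
    (hvb : ∀ t ≥ (0 : ℝ), a < v t ∧ v t < b) :
    Filter.Tendsto (fun t : ℝ => (1 / t) • ∫ s in (0 : ℝ)..t, x s)
        Filter.atTop (nhds ((μ / (C ⬝ᵥ A⁻¹ *ᵥ B)) • (A⁻¹ *ᵥ B))) ∧
    Filter.Tendsto (fun t : ℝ => (1 / t) * ∫ s in (0 : ℝ)..t, v s)
        Filter.atTop (nhds (-μ / ((C ⬝ᵥ A⁻¹ *ᵥ B) * k))) := by
  -- continuity of solutions
  have hxc : Continuous x :=
    continuous_pi fun i => continuous_iff_continuousAt.2 fun t => (hx t i).continuousAt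
  have hvc : Continuous v := continuous_iff_continuousAt.2 fun t => (hv t).continuousAt
  -- bundled linear maps
  have LA : (Fin d → ℝ) →L[ℝ] (Fin d → ℝ) := LinearMap.toContinuousLinearMap A.mulVecLin
  have hcontA : Continuous fun y : Fin d → ℝ => A *ᵥ y := by
    have := (LinearMap.toContinuousLinearMap A.mulVecLin).continuous
    simpa [LinearMap.coe_toContinuousLinearMap', Matrix.mulVecLin_apply, Matrix.coe_mulVecLin] using this
  have hcontAinv : Continuous fun y : Fin d → ℝ => A⁻¹ *ᵥ y := by
    have := (LinearMap.toContinuousLinearMap A⁻¹.mulVecLin).continuous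
    simpa [LinearMap.coe_toContinuousLinearMap', Matrix.mulVecLin_apply, Matrix.coe_mulVecLin] using this
  have LCl : (Fin d → ℝ) →ₗ[ℝ] ℝ :=
    { toFun := fun y => C ⬝ᵥ y
      map_add' := fun y z => dotProduct_add C y z
      map_smul' := fun c y => by simpa using dotProduct_smul c C y }
  have hcontC : Continuous fun y : Fin d → ℝ => C ⬝ᵥ y := by
    have := (LinearMap.toContinuousLinearMap
      ({ toFun := fun y => C ⬝ᵥ y
         map_add' := fun y z => dotProduct_add C y z
         map_smul' := fun c y => by simpa using dotProduct_smul c C y } :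
        (Fin d → ℝ) →ₗ[ℝ] ℝ)).continuous
    simpa [LinearMap.coe_toContinuousLinearMap'] using this
  have hCx : Continuous fun s => C ⬝ᵥ x s := hcontC.comp hxc
  have hAx : Continuous fun s => A *ᵥ x s := hcontA.comp hxc
  have hkvB : Continuous fun s => (k * v s) • B := (continuous_const.mul hvc).smul continuous_const
  -- FTC for x
  have intA : ∀ t : ℝ, ∫ s in (0:ℝ)..t, A *ᵥ x s = A *ᵥ ∫ s in (0:ℝ)..t, x s := by
    intro t
    have := (LinearMap.toContinuousLinearMap A.mulVecLin).intervalIntegral_comp_comm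
      (hxc.intervalIntegrable (μ := MeasureTheory.volume) 0 t)
    simpa [LinearMap.coe_toContinuousLinearMap', Matrix.mulVecLin_apply] using this
  have intC : ∀ t : ℝ, ∫ s in (0:ℝ)..t, C ⬝ᵥ x s = C ⬝ᵥ ∫ s in (0:ℝ)..t, x s := by
    intro t
    have := (LinearMap.toContinuousLinearMap
      ({ toFun := fun y => C ⬝ᵥ y
         map_add' := fun y z => dotProduct_add C y z
         map_smul' := fun c y => by simpa using dotProduct_smul c C y } :
        (Fin d → ℝ) →ₗ[ℝ] ℝ)).intervalIntegral_comp_comm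
      (hxc.intervalIntegrable (μ := MeasureTheory.volume) 0 t)
    simpa [LinearMap.coe_toContinuousLinearMap'] using this
  have key : ∀ t : ℝ,
      A *ᵥ (∫ s in (0:ℝ)..t, x s) + (k * ∫ s in (0:ℝ)..t, v s) • B = x t - x 0 := by
    intro t
    have hft : ∀ s ∈ Set.uIcc (0:ℝ) t, HasDerivAt x (A *ᵥ x s + (k * v s) • B) s :=
      fun s _ => hasDerivAt_pi.2 (hx s)
    have hint := intervalIntegral.integral_eq_sub_of_hasDerivAt hft
      ((hAx.add hkvB).intervalIntegrable 0 t)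
    rw [← hint,
      intervalIntegral.integral_add (hAx.intervalIntegrable 0 t) (hkvB.intervalIntegrable 0 t),
      intA t, intervalIntegral.integral_smul_const, intervalIntegral.integral_const_mul]
  -- FTC for log v
  have logkey : ∀ t ≥ (0:ℝ),
      Real.log (v t) - Real.log (v 0) = α * (μ * t - C ⬝ᵥ ∫ s in (0:ℝ)..t, x s) := by
    intro t ht
    have hft : ∀ s ∈ Set.uIcc (0:ℝ) t,
        HasDerivAt (fun u => Real.log (v u)) (α * (μ - C ⬝ᵥ x s)) s := by
      intro s hs
      rw [Set.uIcc_of_le ht] at hs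
      have hvs : v s ≠ 0 := ne_of_gt (lt_trans ha (hvb s hs.1).1)
      have h := (hv s).log hvs
      convert h using 1
      field_simp
    have hint := intervalIntegral.integral_eq_sub_of_hasDerivAt hft
      ((continuous_const.mul (continuous_const.sub hCx)).intervalIntegrable 0 t)
    rw [← hint, intervalIntegral.integral_const_mul]
    congr 1
    rw [intervalIntegral.integral_sub intervalIntegrable_const (hCx.intervalIntegrable 0 t),
      intC t]
    congr 1
    simp [mul_comm]
  -- bounds
  have hnormx : ∀ t ≥ (0:ℝ), ‖x t - x 0‖ ≤ b - a := by
    intro t ht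
    rw [pi_norm_le_iff_of_nonneg (by linarith)]
    intro i
    have h1 := hxb t ht i
    have h2 := hxb 0 le_rfl i
    rw [Pi.sub_apply, Real.norm_eq_abs, abs_le]
    constructor <;> linarith [h1.1, h1.2, h2.1, h2.2]
  set M := |Real.log a| + |Real.log b| with hM
  have hlogb : ∀ t ≥ (0:ℝ), |Real.log (v t)| ≤ M := by
    intro t ht
    have h1 := (hvb t ht).1
    have h2 := (hvb t ht).2
    have l1 : Real.log a ≤ Real.log (v t) := Real.log_le_log ha h1.le
    have l2 : Real.log (v t) ≤ Real.log b := Real.log_le_log (ha.trans h1) h2.le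
    have e1 := neg_abs_le (Real.log a)
    have e2 := le_abs_self (Real.log b)
    have e3 := abs_nonneg (Real.log a)
    have e4 := abs_nonneg (Real.log b)
    rw [abs_le]
    constructor <;> [skip; skip] <;> simp only [hM] <;> linarith
  -- limit of (1/t) • (x t - x 0)
  have hA1 : Tendsto (fun t : ℝ => A *ᵥ ((1/t) • ∫ s in (0:ℝ)..t, x s)
      + (k * ((1/t) * ∫ s in (0:ℝ)..t, v s)) • B) atTop (nhds 0) := by
    have h0 : Tendsto (fun t : ℝ => (1/t) • (x t - x 0)) atTop (nhds (0 : Fin d → ℝ)) := by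
      have hbnd : ∀ᶠ t in (atTop : Filter ℝ), ‖(1/t) • (x t - x 0)‖ ≤ (b - a) * t⁻¹ := by
        filter_upwards [eventually_gt_atTop (0:ℝ)] with t ht
        rw [norm_smul]
        have h1 : ‖(1:ℝ)/t‖ = t⁻¹ := by
          rw [Real.norm_eq_abs, abs_of_pos (by positivity)]; simp
        rw [h1]
        calc t⁻¹ * ‖x t - x 0‖ ≤ t⁻¹ * (b - a) :=
              mul_le_mul_of_nonneg_left (hnormx t ht.le) (by positivity)
          _ = (b - a) * t⁻¹ := by ring
      have hlim : Tendsto (fun t : ℝ => (b - a) * t⁻¹) atTop (nhds 0) := by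
        simpa using tendsto_inv_atTop_zero.const_mul (b - a)
      exact squeeze_zero_norm' hbnd hlim
    apply h0.congr'
    filter_upwards [eventually_gt_atTop (0:ℝ)] with t ht
    rw [← key t, smul_add, Matrix.mulVec_smul, smul_smul,
      show k * (1/t * ∫ s in (0:ℝ)..t, v s) = 1/t * (k * ∫ s in (0:ℝ)..t, v s) by ring]
  -- limit of C ⬝ᵥ time-average of x
  have hB : Tendsto (fun t : ℝ => C ⬝ᵥ ((1/t) • ∫ s in (0:ℝ)..t, x s)) atTop (nhds μ) := by
    have hB0 : Tendsto (fun t : ℝ => μ - C ⬝ᵥ ((1/t) • ∫ s in (0:ℝ)..t, x s)) atTop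
        (nhds 0) := by
      have hbnd : ∀ᶠ t in (atTop : Filter ℝ),
          ‖μ - C ⬝ᵥ ((1/t) • ∫ s in (0:ℝ)..t, x s)‖ ≤ (2 * M / α) * t⁻¹ := by
        filter_upwards [eventually_gt_atTop (0:ℝ)] with t ht
        have heq : μ - C ⬝ᵥ ((1/t) • ∫ s in (0:ℝ)..t, x s)
            = (Real.log (v t) - Real.log (v 0)) / (α * t) := by
          rw [dotProduct_smul, smul_eq_mul, logkey t ht.le]
          field_simp
        have hb1 := abs_le.1 (hlogb t ht.le)
        have hb2 := abs_le.1 (hlogb 0 le_rfl)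
        have habs : |Real.log (v t) - Real.log (v 0)| ≤ 2 * M := by
          rw [abs_le]; constructor <;> linarith [hb1.1, hb1.2, hb2.1, hb2.2]
        rw [heq, Real.norm_eq_abs, abs_div, abs_of_pos (by positivity : (0:ℝ) < α * t)]
        calc |Real.log (v t) - Real.log (v 0)| / (α * t) ≤ (2 * M) / (α * t) := by
              gcongr
          _ = (2 * M / α) * t⁻¹ := by field_simp
      have hlim : Tendsto (fun t : ℝ => (2 * M / α) * t⁻¹) atTop (nhds 0) := by
        simpa using tendsto_inv_atTop_zero.const_mul (2 * M / α)
      exact squeeze_zero_norm' hbnd hlim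
    have := (tendsto_const_nhds (x := μ) (f := atTop)).sub hB0
    simpa using this
  -- main algebra
  set w := A⁻¹ *ᵥ B with hw
  set g := C ⬝ᵥ w with hgdef
  have hinv : ∀ y : Fin d → ℝ, A⁻¹ *ᵥ (A *ᵥ y) = y := by
    intro y
    rw [Matrix.mulVec_mulVec, Matrix.nonsing_inv_mul A ((Matrix.isUnit_iff_isUnit_det A).1 hA),
      Matrix.one_mulVec]
  have hC1 : Tendsto (fun t : ℝ => ((1/t) • ∫ s in (0:ℝ)..t, x s) + (k * ((1/t) * ∫ s in (0:ℝ)..t, v s)) • w) atTop (nhds 0) := by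
    have h2 := (hcontAinv.tendsto 0).comp hA1
    rw [Matrix.mulVec_zero] at h2
    apply h2.congr
    intro t
    show A⁻¹ *ᵥ (A *ᵥ ((1/t) • ∫ s in (0:ℝ)..t, x s) + (k * ((1/t) * ∫ s in (0:ℝ)..t, v s)) • B) = ((1/t) • ∫ s in (0:ℝ)..t, x s) + (k * ((1/t) * ∫ s in (0:ℝ)..t, v s)) • w
    rw [hw, Matrix.mulVec_add, Matrix.mulVec_smul, Matrix.mulVec_smul, hinv, Matrix.mulVec_smul]
  have hC2 : Tendsto (fun t : ℝ => C ⬝ᵥ ((1/t) • ∫ s in (0:ℝ)..t, x s) + (k * ((1/t) * ∫ s in (0:ℝ)..t, v s)) * g) atTop (nhds 0) := by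
    have h2 := (hcontC.tendsto 0).comp hC1
    rw [dotProduct_zero] at h2
    apply h2.congr
    intro t
    show C ⬝ᵥ (((1/t) • ∫ s in (0:ℝ)..t, x s) + (k * ((1/t) * ∫ s in (0:ℝ)..t, v s)) • w) = C ⬝ᵥ ((1/t) • ∫ s in (0:ℝ)..t, x s) + (k * ((1/t) * ∫ s in (0:ℝ)..t, v s)) * g
    rw [hgdef, dotProduct_add, dotProduct_smul, dotProduct_smul,
      smul_eq_mul, smul_eq_mul]
  have hψ : Tendsto (fun t : ℝ => (1/t) * ∫ s in (0:ℝ)..t, v s) atTop (nhds (-μ / (g * k))) := by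
    have h3 := (hC2.sub hB).mul_const (g * k)⁻¹
    have hval : ((0:ℝ) - μ) * (g * k)⁻¹ = -μ / (g * k) := by ring
    rw [hval] at h3
    apply h3.congr
    intro t
    show (_ + k * ((1/t) * ∫ s in (0:ℝ)..t, v s) * g - _) * (g * k)⁻¹ = _
    rw [add_sub_cancel_left]
    calc (k * ((1/t) * ∫ s in (0:ℝ)..t, v s) * g) * (g * k)⁻¹
        = ((1/t) * ∫ s in (0:ℝ)..t, v s) * ((g * g⁻¹) * (k * k⁻¹)) := by
          rw [mul_inv]; ring
      _ = (1/t) * ∫ s in (0:ℝ)..t, v s := by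
          rw [mul_inv_cancel₀ hg, mul_inv_cancel₀ hk.ne']; ring
  have hkψ : Tendsto (fun t : ℝ => k * ((1/t) * ∫ s in (0:ℝ)..t, v s)) atTop (nhds (k * (-μ / (g * k)))) :=
    hψ.const_mul k
  have h4 := hC1.sub (hkψ.smul_const w)
  have hval : (0 : Fin d → ℝ) - (k * (-μ / (g * k))) • w = (μ / g) • w := by
    rw [zero_sub, ← neg_smul]
    congr 1
    field_simp
  rw [hval] at h4
  have hφ : Tendsto (fun t : ℝ => (1/t) • ∫ s in (0:ℝ)..t, x s) atTop (nhds ((μ / g) • w)) := by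
    apply h4.congr
    intro t
    simp
  exact ⟨hφ, hψ⟩
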